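/- Define g₁(x) = 2a·σ₊(x)e^{−x} for x ≥ 0 (and 0 for x < 0), and recursively g_{n+1}(x) = σ₊(x)·(g_n * f)(x) where f(x) = 2(a σ₊(x) + b σ₋(x))e^{−|x|} and * is convolution on ℝ. Then for each n ≥ 1 there is a polynomial P_n(a,b,x), of degree n−1 in x and homogeneous of degree n in a,b, with g_n(x) = P_n(a,b,x)σ₊(x)e^{−x}, and the polynomials satisfy the integral recursion P_{n+1}(x) = 2(∫₀^x a P_n(y) dy + e^{2x} ∫_x^∞ b P_n(y) e^{−2y} dy) with P₁ = 2a. -/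

import Mathlib

open MeasureTheory Real Filter Set
open scoped Topology

noncomputable def EE : ℕ → ℝ → ℝ
  | 0 => fun _ => 1/2
  | (k+1) => fun x => x^(k+1)/2 + ((k+1 : ℕ) : ℝ)/2 * EE k x

noncomputable def ee (j k : ℕ) : ℝ :=
  if k ≤ j then (j.factorial : ℝ)/(k.factorial * 2^(j-k+1)) else 0

lemma EE_hasDerivAt (k : ℕ) (y : ℝ) :
    HasDerivAt (EE k) (2 * EE k y - y^k) y := by
  induction k generalizing y with
  | zero =>
    simp only [EE, pow_zero]
    norm_num
    exact hasDerivAt_const y _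
  | succ k ih =>
    have h1 : HasDerivAt (fun x : ℝ => x^(k+1)/2 + ((k+1:ℕ):ℝ)/2 * EE k x)
        (((k+1:ℕ):ℝ) * y^k / 2 + ((k+1:ℕ):ℝ)/2 * (2 * EE k y - y^k)) y := by
      have := ((hasDerivAt_pow (k+1) y).div_const 2).add (((ih y)).const_mul (((k+1:ℕ):ℝ)/2))
      refine this.congr_deriv ?_
      push_cast; ring
    have : (((k+1:ℕ):ℝ) * y^k / 2 + ((k+1:ℕ):ℝ)/2 * (2 * EE k y - y^k))
        = 2 * EE (k+1) y - y^(k+1) := by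
      simp only [EE]; push_cast; ring
    rw [this] at h1
    exact h1

lemma tendsto_pow_mul_exp2 (m : ℕ) :
    Tendsto (fun y : ℝ => y^m * Real.exp (-2*y)) atTop (𝓝 0) := by
  have h := (tendsto_pow_mul_exp_neg_atTop_nhds_zero m).mul
    (Real.tendsto_exp_neg_atTop_nhds_zero)
  rw [mul_zero] at h
  refine h.congr fun y => ?_
  rw [mul_assoc, ← Real.exp_add]
  ring_nf

lemma tendsto_EE_mul_exp (k : ℕ) :
    Tendsto (fun y : ℝ => EE k y * Real.exp (-2*y)) atTop (𝓝 0) := by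
  induction k with
  | zero =>
    simpa [EE] using (tendsto_pow_mul_exp2 0).const_mul ((1:ℝ)/2)
  | succ k ih =>
    have h := ((tendsto_pow_mul_exp2 (k+1)).div_const 2).add
      (ih.const_mul (((k+1:ℕ):ℝ)/2))
    norm_num at h
    refine Tendsto.congr (fun y => ?_) h
    simp only [EE]
    push_cast
    ring

lemma integrableOn_aux {h : ℝ → ℝ} (hc : Continuous h)
    (hl : Tendsto (fun y => h y * Real.exp y) atTop (𝓝 0)) (x : ℝ) :
    IntegrableOn h (Set.Ioi x) := by
  obtain ⟨M, hM⟩ := (Filter.eventually_atTop).mp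
    (NormedAddCommGroup.tendsto_nhds_zero.mp hl 1 one_pos)
  set b := max x M with hb
  obtain ⟨C, hC⟩ := isCompact_Icc.exists_bound_of_continuousOn
    (hc.continuousOn : ContinuousOn h (Set.Icc x b))
  have hC0 : 0 ≤ C := le_trans (norm_nonneg _) (hC x ⟨le_refl x, le_max_left _ _⟩)
  set D := max (C * Real.exp b) 1 with hD
  have hbound : ∀ y ∈ Set.Ioi x, ‖h y‖ ≤ D * Real.exp (-y) := by
    intro y hy
    rcases le_or_gt y b with hyb | hyb
    · calc ‖h y‖ ≤ C := hC y ⟨le_of_lt hy, hyb⟩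
        _ ≤ C * Real.exp b * Real.exp (-y) := by
            rw [mul_assoc, ← Real.exp_add]
            nlinarith [Real.one_le_exp (by linarith : (0:ℝ) ≤ b + -y)]
        _ ≤ D * Real.exp (-y) := by
            have := Real.exp_pos (-y)
            exact mul_le_mul_of_nonneg_right (le_max_left _ _) this.le
    · have hyM : M ≤ y := le_trans (le_max_right x M) hyb.le
      have h1 : ‖h y * Real.exp y‖ ≤ 1 := (hM y hyM).le
      have h2 : ‖h y‖ = ‖h y * Real.exp y‖ * Real.exp (-y) := by
        rw [norm_mul, Real.norm_eq_abs (Real.exp y), abs_of_pos (Real.exp_pos y),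
          mul_assoc, ← Real.exp_add]
        simp
      rw [h2]
      have := Real.exp_pos (-y)
      calc ‖h y * Real.exp y‖ * Real.exp (-y) ≤ 1 * Real.exp (-y) :=
            mul_le_mul_of_nonneg_right h1 this.le
        _ ≤ D * Real.exp (-y) := mul_le_mul_of_nonneg_right (le_max_right _ _) this.le
  have hint : IntegrableOn (fun y => D * Real.exp (-y)) (Set.Ioi x) := by
    have := (exp_neg_integrableOn_Ioi x one_pos).const_mul D
    simp at this
    exact this
  refine Integrable.mono' hint hc.aestronglyMeasurable ?_
  rw [ae_restrict_iff' measurableSet_Ioi]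
  exact Filter.Eventually.of_forall hbound

lemma integrableOn_poly_exp (Q : Polynomial ℝ) (x : ℝ) :
    IntegrableOn (fun y => Q.eval y * Real.exp (-2*y)) (Set.Ioi x) := by
  refine integrableOn_aux ((Polynomial.continuous Q).mul (by fun_prop)) ?_ x
  refine (Q.tendsto_div_exp_atTop).congr fun y => ?_
  simp only [Pi.mul_apply]
  rw [div_eq_mul_inv, ← Real.exp_neg, mul_assoc, ← Real.exp_add]
  ring_nf

lemma integrableOn_pow_exp (k : ℕ) (x : ℝ) :
    IntegrableOn (fun y => y^k * Real.exp (-2*y)) (Set.Ioi x) := by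
  have := integrableOn_poly_exp (Polynomial.X ^ k) x
  simp only [Polynomial.eval_pow, Polynomial.eval_X] at this
  exact this

lemma integral_pow_exp (k : ℕ) (x : ℝ) :
    ∫ y in Set.Ioi x, y^k * Real.exp (-2*y) = EE k x * Real.exp (-2*x) := by
  have hd : ∀ y ∈ Set.Ici x, HasDerivAt (fun t => -(EE k t * Real.exp (-2*t)))
      (y^k * Real.exp (-2*y)) y := by
    intro y _
    have he : HasDerivAt (fun t : ℝ => Real.exp (-2*t)) (Real.exp (-2*y) * (-2)) y := by
      have : HasDerivAt (fun t : ℝ => -2*t) (-2) y := by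
        simpa using (hasDerivAt_id y).const_mul (-2:ℝ)
      simpa using this.exp
    have := ((EE_hasDerivAt k y).mul he).neg
    refine this.congr_deriv ?_
    ring
  have ht : Tendsto (fun t => -(EE k t * Real.exp (-2*t))) atTop (𝓝 0) := by
    simpa using (tendsto_EE_mul_exp k).neg
  have := integral_Ioi_of_hasDerivAt_of_tendsto' hd (integrableOn_pow_exp k x) ht
  rw [this]
  ring

lemma ee_diag (k : ℕ) : ee k k = 1/2 := by
  have h1 : (k.factorial : ℝ) ≠ 0 := Nat.cast_ne_zero.mpr k.factorial_ne_zero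
  simp only [ee, if_pos (le_refl k), Nat.sub_self, pow_one]
  field_simp
  norm_num

lemma ee_succ {j k : ℕ} (h : j ≤ k) : ee (k+1) j = ((k+1:ℕ):ℝ)/2 * ee k j := by
  have h1 : (j.factorial : ℝ) ≠ 0 := Nat.cast_ne_zero.mpr j.factorial_ne_zero
  have h2 : k + 1 - j + 1 = (k - j + 1) + 1 := by omega
  simp only [ee, if_pos h, if_pos (le_trans h (Nat.le_succ k)), h2, pow_succ,
    Nat.factorial_succ]
  push_cast
  field_simp

lemma ee_zero {j k : ℕ} (h : j < k) : ee j k = 0 := by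
  simp only [ee, if_neg (by omega : ¬ k ≤ j)]

lemma EE_eq_sum (k : ℕ) (x : ℝ) :
    EE k x = ∑ j ∈ Finset.range (k+1), ee k j * x^j := by
  induction k with
  | zero => simp [EE, ee_diag 0]
  | succ k ih =>
    rw [Finset.sum_range_succ, ee_diag (k+1)]
    have : ∀ j ∈ Finset.range (k+1), ee (k+1) j * x^j
        = ((k+1:ℕ):ℝ)/2 * (ee k j * x^j) := by
      intro j hj
      have hj' := Finset.mem_range.mp hj
      rw [ee_succ (by omega : j ≤ k)]
      ring
    rw [Finset.sum_congr rfl this, ← Finset.mul_sum, ← ih]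
    simp only [EE]
    push_cast
    ring

open MvPolynomial in
noncomputable def qq : ℕ → ℕ → MvPolynomial (Fin 3) ℝ
  | 0, _ => 0
  | 1, k => if k = 0 then C 2 * X 0 else 0
  | (n+2), k =>
      (if k = 0 then 0 else C (2/(k:ℝ)) * X 0 * qq (n+1) (k-1))
      + C 2 * X 1 * ∑ j ∈ Finset.range (n+1), C (ee j k) * qq (n+1) j

noncomputable def PP (n : ℕ) : MvPolynomial (Fin 3) ℝ :=
  ∑ k ∈ Finset.range n, qq n k * MvPolynomial.X 2 ^ k

open MvPolynomial

lemma qq_eq_zero : ∀ n k, n ≤ k → qq n k = 0 := by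
  intro n
  induction n with
  | zero => intro k _; rfl
  | succ n ih =>
    intro k hk
    match n, ih with
    | 0, _ => simp only [qq, if_neg (by omega : ¬ k = 0)]
    | (m+1), ih =>
      have h1 : qq (m+1) (k-1) = 0 := ih (k-1) (by omega)
      have h2 : ∀ j ∈ Finset.range (m+1), C (ee j k) * qq (m+1) j = 0 := by
        intro j hj
        have hj' := Finset.mem_range.mp hj
        rw [ee_zero (by omega : j < k), map_zero, zero_mul]
      simp only [qq, h1, mul_zero, ite_self, Finset.sum_eq_zero h2, mul_zero, add_zero]

lemma qq_deg2 : ∀ n k, MvPolynomial.degreeOf 2 (qq n k) = 0 := by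
  intro n
  induction n with
  | zero => intro k; exact degreeOf_zero 2
  | succ n ih =>
    intro k
    refine Nat.le_zero.mp ?_
    match n, ih with
    | 0, _ =>
      show degreeOf 2 (qq 1 k) ≤ 0
      rw [qq]
      split_ifs
      · refine le_trans (degreeOf_mul_le _ _ _) ?_
        simp [degreeOf_C, degreeOf_X]
      · simp [degreeOf_zero]
    | (m+1), ih =>
      show degreeOf 2 (qq (m+2) k) ≤ 0
      rw [qq]
      refine le_trans (degreeOf_add_le _ _ _) ?_
      simp only [max_le_iff]
      refine ⟨?_, ?_⟩
      · split_ifs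
        · simp [degreeOf_zero]
        · calc degreeOf 2 (C (2/(k:ℝ)) * X 0 * qq (m+1) (k-1))
              ≤ degreeOf 2 (C (2/(k:ℝ)) * X 0) + degreeOf 2 (qq (m+1) (k-1)) :=
                degreeOf_mul_le _ _ _
            _ ≤ (degreeOf 2 (C (2/(k:ℝ)) : MvPolynomial (Fin 3) ℝ)
                  + degreeOf 2 (X 0 : MvPolynomial (Fin 3) ℝ)) + 0 :=
                add_le_add (degreeOf_mul_le _ _ _) (le_of_eq (ih _))
            _ = 0 := by simp [degreeOf_C, degreeOf_X]
      · calc degreeOf 2 (C (2:ℝ) * X 1 * ∑ j ∈ Finset.range (m+1), C (ee j k) * qq (m+1) j)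
            ≤ degreeOf 2 (C (2:ℝ) * (X 1 : MvPolynomial (Fin 3) ℝ))
              + degreeOf 2 (∑ j ∈ Finset.range (m+1), C (ee j k) * qq (m+1) j) :=
              degreeOf_mul_le _ _ _
          _ ≤ 0 + 0 := by
              refine add_le_add ?_ ?_
              · refine le_trans (degreeOf_mul_le _ _ _) ?_
                simp [degreeOf_C, degreeOf_X]
              · refine le_trans (degreeOf_sum_le _ _ _) ?_
                refine Finset.sup_le fun j _ => ?_
                refine le_trans (degreeOf_mul_le _ _ _) ?_
                simp [degreeOf_C, ih]
          _ = 0 := by simp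

lemma qq_homog : ∀ n, 1 ≤ n → ∀ k,
    MvPolynomial.IsWeightedHomogeneous ![1,1,0] (qq n k) n := by
  intro n hn
  induction n, hn using Nat.le_induction with
  | base =>
    intro k
    simp only [qq]
    split_ifs
    · have h1 := isWeightedHomogeneous_C (R := ℝ) ![1,1,0] (2:ℝ)
      have h2 := isWeightedHomogeneous_X (R := ℝ) ![1,1,0] (0 : Fin 3)
      have := h1.mul h2
      simpa using this
    · exact isWeightedHomogeneous_zero (R := ℝ) ![1,1,0] 1
  | succ n hn ih =>
    intro k
    obtain ⟨m, rfl⟩ : ∃ m, n = m + 1 := ⟨n - 1, by omega⟩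
    rw [show m + 1 + 1 = m + 2 from rfl, qq]
    refine MvPolynomial.IsWeightedHomogeneous.add ?_ ?_
    · split_ifs
      · exact isWeightedHomogeneous_zero (R := ℝ) ![1,1,0] (m+2)
      · have h1 := isWeightedHomogeneous_C (R := ℝ) ![1,1,0] (2/(k:ℝ))
        have h2 := isWeightedHomogeneous_X (R := ℝ) ![1,1,0] (0 : Fin 3)
        have h3 := (h1.mul h2).mul (ih (k-1))
        have he : (0 : ℕ) + (![1,1,0] : Fin 3 → ℕ) 0 + (m+1) = m + 2 := by
          show (0:ℕ) + 1 + (m+1) = m + 2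
          omega
        rwa [he] at h3
    · have h1 := isWeightedHomogeneous_C (R := ℝ) ![1,1,0] (2:ℝ)
      have h2 := isWeightedHomogeneous_X (R := ℝ) ![1,1,0] (1 : Fin 3)
      have hs : MvPolynomial.IsWeightedHomogeneous ![1,1,0]
          (∑ j ∈ Finset.range (m+1), C (ee j k) * qq (m+1) j) (m+1) := by
        rw [← mem_weightedHomogeneousSubmodule]
        refine Submodule.sum_mem _ fun j _ => ?_
        rw [mem_weightedHomogeneousSubmodule]
        have := (isWeightedHomogeneous_C (R := ℝ) ![1,1,0] (ee j k)).mul (ih j)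
        simpa using this
      have h3 := (h1.mul h2).mul hs
      have he : (0 : ℕ) + (![1,1,0] : Fin 3 → ℕ) 1 + (m+1) = m + 2 := by
        show (0:ℕ) + 1 + (m+1) = m + 2
        omega
      rwa [he] at h3

lemma qq_top : ∀ n, 1 ≤ n → qq n (n-1)
    = C ((2:ℝ)^n / (n-1).factorial) * X 0 ^ n := by
  intro n hn
  induction n, hn using Nat.le_induction with
  | base => norm_num [qq]
  | succ n hn ih =>
    obtain ⟨m, rfl⟩ : ∃ m, n = m + 1 := ⟨n - 1, by omega⟩
    rw [show m + 1 + 1 = m + 2 from rfl, show m + 2 - 1 = m + 1 from rfl]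
    rw [qq, if_neg (by omega : ¬ m + 1 = 0)]
    have hs : ∀ j ∈ Finset.range (m+1), C (ee j (m+1)) * qq (m+1) j = 0 := by
      intro j hj
      have := Finset.mem_range.mp hj
      rw [ee_zero (by omega : j < m+1), map_zero, zero_mul]
    rw [Finset.sum_eq_zero hs, mul_zero, add_zero]
    rw [show m + 1 - 1 = m from rfl]
    rw [show m + 1 - 1 = m from rfl] at ih
    rw [ih]
    have hfact : ((m+1).factorial : ℝ) ≠ 0 := Nat.cast_ne_zero.mpr (Nat.factorial_ne_zero _)
    have hmfact : ((m).factorial : ℝ) ≠ 0 := Nat.cast_ne_zero.mpr (Nat.factorial_ne_zero _)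
    have hc : (2/((m+1:ℕ):ℝ)) * ((2:ℝ)^(m+1) / m.factorial)
        = (2:ℝ)^(m+2) / (m+1).factorial := by
      rw [Nat.factorial_succ]
      push_cast
      field_simp
      ring
    rw [← hc]
    push_cast
    rw [map_mul]
    ring

lemma coeff_eq_zero_of_deg2 {p : MvPolynomial (Fin 3) ℝ} (hp : degreeOf 2 p = 0)
    {m : Fin 3 →₀ ℕ} (hm : m 2 ≠ 0) : MvPolynomial.coeff m p = 0 := by
  by_contra h
  have hmem : m ∈ p.support := mem_support_iff.mpr h
  have h2 := Finset.le_sup (f := fun m : Fin 3 →₀ ℕ => m 2) hmem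
  rw [← degreeOf_eq_sup, hp] at h2
  simp only [Nat.le_zero] at h2
  exact hm h2

lemma PP_deg2 (n : ℕ) (hn : 1 ≤ n) : MvPolynomial.degreeOf 2 (PP n) = n - 1 := by
  apply le_antisymm
  · refine le_trans (degreeOf_sum_le _ _ _) ?_
    refine Finset.sup_le fun k hk => ?_
    have hk' := Finset.mem_range.mp hk
    refine le_trans (degreeOf_mul_le _ _ _) ?_
    have h2 : degreeOf 2 ((X 2 : MvPolynomial (Fin 3) ℝ)^k) ≤ k := by
      refine le_trans (degreeOf_pow_le _ _ _) ?_
      simp [degreeOf_X]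
    calc degreeOf 2 (qq n k) + degreeOf 2 ((X 2 : MvPolynomial (Fin 3) ℝ) ^ k)
        ≤ 0 + k := add_le_add (le_of_eq (qq_deg2 n k)) h2
      _ ≤ n - 1 := by omega
  · set m : Fin 3 →₀ ℕ := Finsupp.single 0 n + Finsupp.single 2 (n-1) with hm
    have hm2 : m 2 = n - 1 := by
      simp [hm, Finsupp.single_apply]
    have hterm : ∀ k ∈ Finset.range n, MvPolynomial.coeff m (qq n k * X 2 ^ k)
        = if k = n-1 then (2:ℝ)^n/(n-1).factorial else 0 := by
      intro k hk
      have hk' := Finset.mem_range.mp hk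
      rw [X_pow_eq_monomial, coeff_mul_monomial']
      rw [if_pos (Finsupp.single_le_iff.mpr (by omega : k ≤ m 2) : Finsupp.single 2 k ≤ m)]
      split_ifs with hkn
      · have hmsub : m - Finsupp.single 2 k = Finsupp.single 0 n := by
          rw [hm, hkn]
          exact add_tsub_cancel_right _ _
        rw [hmsub, hkn, qq_top n hn, coeff_C_mul, coeff_X_pow, if_pos rfl]
        ring
      · have h4 := Finsupp.tsub_apply m (Finsupp.single (2 : Fin 3) k) 2
        rw [Finsupp.single_eq_same] at h4
        rw [coeff_eq_zero_of_deg2 (qq_deg2 n k) (by rw [h4, hm2]; omega), zero_mul]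
    have hcoeff : MvPolynomial.coeff m (PP n) = (2:ℝ)^n / (n-1).factorial := by
      rw [PP, coeff_sum, Finset.sum_congr rfl hterm, Finset.sum_ite_eq' (Finset.range n)]
      rw [if_pos (Finset.mem_range.mpr (by omega : n - 1 < n))]
    have hne : MvPolynomial.coeff m (PP n) ≠ 0 := by
      rw [hcoeff]
      positivity
    have hmem : m ∈ (PP n).support := mem_support_iff.mpr hne
    have h2 := Finset.le_sup (f := fun m : Fin 3 →₀ ℕ => m 2) hmem
    rw [← degreeOf_eq_sup] at h2
    have h3 : m 2 ≤ degreeOf 2 (PP n) := h2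
    omega

lemma eval_indep {p : MvPolynomial (Fin 3) ℝ} (hp : degreeOf 2 p = 0) (a b y y' : ℝ) :
    eval ![a,b,y] p = eval ![a,b,y'] p := by
  rw [eval_eq, eval_eq]
  refine Finset.sum_congr rfl fun d hd => ?_
  congr 1
  refine Finset.prod_congr rfl fun i hi => ?_
  have h2 : d 2 = 0 := by
    by_contra h
    have h3 := Finset.le_sup (f := fun m : Fin 3 →₀ ℕ => m 2) hd
    rw [← degreeOf_eq_sup, hp] at h3
    have h4 : d 2 ≤ 0 := h3
    omega
  have hne : i ≠ 2 := by
    intro h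
    subst h
    exact (Finsupp.mem_support_iff.mp hi) h2
  fin_cases i <;> simp_all

lemma eval_PP (n : ℕ) (a b x : ℝ) :
    eval ![a,b,x] (PP n) = ∑ k ∈ Finset.range n, eval ![a,b,0] (qq n k) * x^k := by
  rw [PP, map_sum]
  refine Finset.sum_congr rfl fun k _ => ?_
  rw [eval_mul, eval_pow, eval_X, eval_indep (qq_deg2 n k) a b x 0]
  simp

lemma eval_qq_succ (m k : ℕ) (a b : ℝ) :
    eval ![a,b,0] (qq (m+2) k)
      = (if k = 0 then (0:ℝ) else 2/(k:ℝ) * a * eval ![a,b,0] (qq (m+1) (k-1)))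
        + 2 * b * ∑ j ∈ Finset.range (m+1), ee j k * eval ![a,b,0] (qq (m+1) j) := by
  rw [qq]
  split_ifs with h
  · simp [eval_C, eval_X, Finset.mul_sum]
  · simp [eval_C, eval_X, Finset.mul_sum]

lemma PP_rec (n : ℕ) (hn : 1 ≤ n) (a b x : ℝ) :
    eval ![a,b,x] (PP (n+1)) =
      2 * (a * ∫ y in (0:ℝ)..x, eval ![a,b,y] (PP n))
      + 2 * (Real.exp (2*x) * b *
          ∫ y in Set.Ioi x, eval ![a,b,y] (PP n) * Real.exp (-2*y)) := by
  obtain ⟨m, rfl⟩ : ∃ m, n = m + 1 := ⟨n-1, by omega⟩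
  set c : ℕ → ℝ := fun k => eval ![a,b,0] (qq (m+1) k) with hc
  have hint1 : (∫ y in (0:ℝ)..x, eval ![a,b,y] (PP (m+1)))
      = ∑ k ∈ Finset.range (m+1), c k * (x^(k+1)/((k:ℝ)+1)) := by
    rw [intervalIntegral.integral_congr
      (g := fun y => ∑ k ∈ Finset.range (m+1), c k * y^k)
      (fun y _ => eval_PP (m+1) a b y)]
    rw [intervalIntegral.integral_finset_sum (f := fun k y => c k * y ^ k)
      (fun k _ => ((continuous_const.mul (continuous_pow k)).intervalIntegrable 0 x))]
    refine Finset.sum_congr rfl fun k _ => ?_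
    rw [intervalIntegral.integral_const_mul, integral_pow]
    norm_num
  have hint2 : (∫ y in Set.Ioi x, eval ![a,b,y] (PP (m+1)) * Real.exp (-2*y))
      = (∑ k ∈ Finset.range (m+1), c k * EE k x) * Real.exp (-2*x) := by
    have heq : Set.EqOn (fun y => eval ![a,b,y] (PP (m+1)) * Real.exp (-2*y))
        (fun y => ∑ k ∈ Finset.range (m+1), c k * (y^k * Real.exp (-2*y)))
        (Set.Ioi x) := by
      intro y _
      simp only
      rw [eval_PP, Finset.sum_mul]
      exact Finset.sum_congr rfl fun k _ => by ring
    rw [setIntegral_congr_fun measurableSet_Ioi heq]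
    rw [integral_finset_sum _
      (fun k _ => ((integrableOn_pow_exp k x).const_mul (c k)))]
    rw [Finset.sum_mul]
    refine Finset.sum_congr rfl fun k _ => ?_
    rw [integral_const_mul, integral_pow_exp]
    ring
  rw [hint1, hint2, eval_PP]
  rw [Finset.sum_congr rfl (fun k (_ : k ∈ Finset.range (m+1+1)) => by
    rw [eval_qq_succ m k a b])]
  simp only [add_mul, Finset.sum_add_distrib, ← hc]
  have e1 : (∑ k ∈ Finset.range (m+1+1),
        (if k = 0 then (0:ℝ) else 2/(k:ℝ) * a * c (k-1)) * x^k)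
      = 2 * (a * ∑ k ∈ Finset.range (m+1), c k * (x^(k+1)/((k:ℝ)+1))) := by
    have h0 : (if (0:ℕ) = 0 then (0:ℝ) else 2/((0:ℕ):ℝ) * a * c (0-1)) * x^0 = 0 := by
      simp
    rw [Finset.sum_range_succ', h0, add_zero, Finset.mul_sum, Finset.mul_sum]
    refine Finset.sum_congr rfl fun k _ => ?_
    rw [if_neg (Nat.succ_ne_zero k), Nat.add_sub_cancel]
    have hk : ((k:ℝ)+1) ≠ 0 := by positivity
    push_cast
    field_simp
  have e2 : (∑ k ∈ Finset.range (m+1+1),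
        2 * b * (∑ j ∈ Finset.range (m+1), ee j k * c j) * x^k)
      = 2 * (Real.exp (2*x) * b *
          ((∑ k ∈ Finset.range (m+1), c k * EE k x) * Real.exp (-2*x))) := by
    have hexp : Real.exp (2*x) * Real.exp (-2*x) = 1 := by
      rw [← Real.exp_add]; norm_num
    have hswap : (∑ k ∈ Finset.range (m+1+1),
          2 * b * (∑ j ∈ Finset.range (m+1), ee j k * c j) * x^k)
        = 2 * b * ∑ j ∈ Finset.range (m+1), c j *
            (∑ k ∈ Finset.range (m+1+1), ee j k * x^k) := by
      rw [show (∑ k ∈ Finset.range (m+1+1),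
          2 * b * (∑ j ∈ Finset.range (m+1), ee j k * c j) * x^k)
        = ∑ k ∈ Finset.range (m+1+1), ∑ j ∈ Finset.range (m+1),
            2 * b * (ee j k * c j) * x^k from Finset.sum_congr rfl fun k _ => by
          rw [Finset.mul_sum, Finset.sum_mul]]
      rw [Finset.sum_comm, Finset.mul_sum]
      refine Finset.sum_congr rfl fun j _ => ?_
      rw [Finset.mul_sum, Finset.mul_sum]
      exact Finset.sum_congr rfl fun k _ => by ring
    have hEE : ∀ j ∈ Finset.range (m+1),
        (∑ k ∈ Finset.range (m+1+1), ee j k * x^k) = EE j x := by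
      intro j hj
      have hj' := Finset.mem_range.mp hj
      rw [EE_eq_sum]
      rw [← Finset.sum_subset (Finset.range_subset_range.mpr (by omega : j+1 ≤ m+1+1))]
      intro k hk1 hk2
      rw [ee_zero (by simp at hk1 hk2 ⊢; omega : j < k), zero_mul]
    rw [hswap, Finset.sum_congr rfl (fun j hj => by rw [hEE j hj])]
    have hr : 2 * (Real.exp (2*x) * b *
          ((∑ k ∈ Finset.range (m+1), c k * EE k x) * Real.exp (-2*x)))
        = 2 * b * (∑ k ∈ Finset.range (m+1), c k * EE k x)
          * (Real.exp (2*x) * Real.exp (-2*x)) := by ring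
    rw [hr, hexp, mul_one, mul_assoc]
  rw [e1, e2]

lemma continuous_eval_PP (n : ℕ) (a b : ℝ) :
    Continuous fun y => eval ![a,b,y] (PP n) := by
  have h : (fun y => eval ![a,b,y] (PP n))
      = fun y => ∑ k ∈ Finset.range n, eval ![a,b,0] (qq n k) * y^k :=
    funext (eval_PP n a b)
  rw [h]
  exact continuous_finset_sum _ fun k _ => continuous_const.mul (continuous_pow k)

lemma integrableOn_eval_PP (n : ℕ) (a b x : ℝ) :
    IntegrableOn (fun y => eval ![a,b,y] (PP n) * Real.exp (-2*y)) (Set.Ioi x) := by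
  have h : (fun y => eval ![a,b,y] (PP n) * Real.exp (-2*y))
      = fun y => ∑ k ∈ Finset.range n, eval ![a,b,0] (qq n k) * (y^k * Real.exp (-2*y)) := by
    funext y
    rw [eval_PP, Finset.sum_mul]
    exact Finset.sum_congr rfl fun k _ => by ring
  rw [h]
  exact integrable_finset_sum _ fun k _ => (integrableOn_pow_exp k x).const_mul _

lemma G_claim : ∀ n, 1 ≤ n → ∀ a b : ℝ, ∀ g : ℕ → ℝ → ℝ,
    (∀ x, g 1 x = (if 0 ≤ x then (1 : ℝ) else 0) * (2 * a * Real.exp (-x))) →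
    (∀ m : ℕ, 1 ≤ m → ∀ x, g (m + 1) x =
      (if 0 ≤ x then (1 : ℝ) else 0) *
        ∫ y, g m y *
          (2 * (a * (if 0 ≤ x - y then (1 : ℝ) else 0)
              + b * (if x - y < 0 then (1 : ℝ) else 0)) *
            Real.exp (-|x - y|))) →
    ∀ x, g n x =
      MvPolynomial.eval ![a, b, x] (PP n) *
        (if 0 ≤ x then (1 : ℝ) else 0) * Real.exp (-x) := by
  intro n hn
  induction n, hn using Nat.le_induction with
  | base =>
    intro a b g h1 _ x
    rw [h1 x]
    have he : eval ![a,b,x] (PP 1) = 2 * a := by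
      rw [eval_PP]
      simp [qq]
    rw [he]
    ring
  | succ n hn ih =>
    intro a b g h1 hstep x
    have ihx := ih a b g h1 hstep
    rw [hstep n hn x]
    by_cases hx : 0 ≤ x
    · rw [if_pos hx, one_mul]
      simp only [ihx]
      have hind : (fun y => eval ![a,b,y] (PP n) * (if 0 ≤ y then (1:ℝ) else 0)
            * Real.exp (-y) *
            (2 * (a * (if 0 ≤ x - y then (1:ℝ) else 0)
                + b * (if x - y < 0 then (1:ℝ) else 0)) * Real.exp (-|x - y|)))
          = (Set.Ici (0:ℝ)).indicator (fun y => eval ![a,b,y] (PP n) * Real.exp (-y) *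
            (2 * (a * (if 0 ≤ x - y then (1:ℝ) else 0)
                + b * (if x - y < 0 then (1:ℝ) else 0)) * Real.exp (-|x - y|))) := by
        funext y
        by_cases h : 0 ≤ y <;> simp [Set.indicator_apply, Set.mem_Ici, h]
      rw [hind, integral_indicator measurableSet_Ici, integral_Ici_eq_integral_Ioi]
      set h : ℝ → ℝ := fun y => eval ![a,b,y] (PP n) * Real.exp (-y) *
            (2 * (a * (if 0 ≤ x - y then (1:ℝ) else 0)
                + b * (if x - y < 0 then (1:ℝ) else 0)) * Real.exp (-|x - y|)) with hh
      have heq1 : Set.EqOn h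
          (fun y => (2 * a * Real.exp (-x)) * eval ![a,b,y] (PP n)) (Set.Ioc 0 x) := by
        intro y hy
        have h1y : 0 ≤ x - y := by
          rcases hy with ⟨hy1, hy2⟩; linarith
        have hexp : Real.exp (-y) * Real.exp (-(x-y)) = Real.exp (-x) := by
          rw [← Real.exp_add]; ring_nf
        simp only [hh, if_pos h1y, if_neg (not_lt.mpr h1y), abs_of_nonneg h1y]
        rw [← hexp]
        ring
      have heq2 : Set.EqOn h
          (fun y => (2 * b * Real.exp x) *
            (eval ![a,b,y] (PP n) * Real.exp (-2*y))) (Set.Ioi x) := by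
        intro y hy
        have h1y : x - y < 0 := by
          simp only [Set.mem_Ioi] at hy; linarith
        have hexp : Real.exp (-y) * Real.exp (-(-(x-y)))
            = Real.exp x * Real.exp (-2*y) := by
          rw [← Real.exp_add, ← Real.exp_add]; ring_nf
        simp only [hh, if_neg (not_le.mpr h1y), if_pos h1y, abs_of_neg h1y]
        linear_combination 2 * b * (eval ![a,b,y] (PP n)) * hexp
      have hi1 : IntegrableOn h (Set.Ioc 0 x) := by
        refine (IntegrableOn.congr_fun ?_ heq1.symm measurableSet_Ioc)
        exact (Continuous.integrableOn_Ioc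
          (continuous_const.mul (continuous_eval_PP n a b)))
      have hi2 : IntegrableOn h (Set.Ioi x) := by
        refine (IntegrableOn.congr_fun ?_ heq2.symm measurableSet_Ioi)
        exact (integrableOn_eval_PP n a b x).const_mul _
      rw [← Set.Ioc_union_Ioi_eq_Ioi hx,
        setIntegral_union (Set.Ioc_disjoint_Ioi le_rfl) measurableSet_Ioi hi1 hi2]
      rw [setIntegral_congr_fun measurableSet_Ioc heq1,
        setIntegral_congr_fun measurableSet_Ioi heq2]
      rw [integral_const_mul, integral_const_mul]
      rw [← intervalIntegral.integral_of_le hx]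
      rw [PP_rec n hn a b x]
      have hxe : Real.exp (-x) * Real.exp (2*x) = Real.exp x := by
        rw [← Real.exp_add]; ring_nf
      set T1 := ∫ y in (0:ℝ)..x, eval ![a,b,y] (PP n) with hT1
      set T2 := ∫ y in Set.Ioi x, eval ![a,b,y] (PP n) * Real.exp (-2*y) with hT2
      linear_combination (-2*b*T2) * hxe
    · rw [if_neg hx]
      ring

lemma PP_homog (n : ℕ) (hn : 1 ≤ n) :
    MvPolynomial.IsWeightedHomogeneous ![1,1,0] (PP n) n := by
  have h2 : ∀ k, MvPolynomial.IsWeightedHomogeneous ![1,1,0]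
      ((X 2 : MvPolynomial (Fin 3) ℝ)^k) 0 := by
    intro k
    induction k with
    | zero => simpa using isWeightedHomogeneous_one (R := ℝ) (![1,1,0] : Fin 3 → ℕ)
    | succ k ih =>
      rw [pow_succ]
      have := ih.mul (isWeightedHomogeneous_X (R:=ℝ) ![1,1,0] (2 : Fin 3))
      simpa using this
  rw [PP, ← mem_weightedHomogeneousSubmodule]
  refine Submodule.sum_mem _ fun k _ => ?_
  rw [mem_weightedHomogeneousSubmodule]
  have := (qq_homog n hn k).mul (h2 k)
  simpa using this

lemma PP_one : PP 1 = 2 * MvPolynomial.X 0 := by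
  rw [PP]
  simp [qq]
  rw [show ((C (2:ℝ)) : MvPolynomial (Fin 3) ℝ) = 2 from map_ofNat _ 2]

open MeasureTheory

theorem catalan_convolution_polynomials :
    ∃ P : ℕ → MvPolynomial (Fin 3) ℝ,
      P 1 = 2 * MvPolynomial.X 0 ∧
      ∀ n : ℕ, 1 ≤ n →
        MvPolynomial.degreeOf 2 (P n) = n - 1 ∧
        (P n).IsWeightedHomogeneous ![1, 1, 0] n ∧
        (∀ a b x : ℝ,
          MvPolynomial.eval ![a, b, x] (P (n + 1)) =
            2 * (a * ∫ y in (0 : ℝ)..x, MvPolynomial.eval ![a, b, y] (P n))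
            + 2 * (Real.exp (2 * x) * b *
                ∫ y in Set.Ioi x,
                  MvPolynomial.eval ![a, b, y] (P n) * Real.exp (-2 * y))) ∧
        (∀ a b : ℝ, ∀ g : ℕ → ℝ → ℝ,
          (∀ x, g 1 x = (if 0 ≤ x then (1 : ℝ) else 0) * (2 * a * Real.exp (-x))) →
          (∀ m : ℕ, 1 ≤ m → ∀ x, g (m + 1) x =
            (if 0 ≤ x then (1 : ℝ) else 0) *
              ∫ y, g m y *
                (2 * (a * (if 0 ≤ x - y then (1 : ℝ) else 0)
                    + b * (if x - y < 0 then (1 : ℝ) else 0)) *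
                  Real.exp (-|x - y|))) →
          ∀ x, g n x =
            MvPolynomial.eval ![a, b, x] (P n) *
              (if 0 ≤ x then (1 : ℝ) else 0) * Real.exp (-x)) := by
  refine ⟨PP, PP_one, fun n hn => ⟨PP_deg2 n hn, PP_homog n hn,
    fun a b x => PP_rec n hn a b x, fun a b g h1 hstep x =>
      G_claim n hn a b g h1 hstep x⟩⟩
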